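/- Let σ_H(x) = 1 if x ≥ 0 and 0 otherwise (the Heaviside function), and for positive α₀, α₁ let HTAF(x | α₀, α₁) = σ(α₁ tanh(α₀ x)). Given ε ∈ (0, 1/2) with α₁ > log((1-ε)/ε) and α₀ ≥ (1/(2ε)) log((α₁ + log((1-ε)/ε))/(α₁ - log((1-ε)/ε))), we have |σ_H(x) - HTAF(x | α₀, α₁)| ≤ ε for all x with |x| ≥ ε, and |σ_H(x) - HTAF(x | α₀, α₁)| ≤ 1 for all x. -/

import Mathlib

noncomputable def sigmoid (x : ℝ) : ℝ := 1 / (1 + Real.exp (-x))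

noncomputable def HTAF (α₀ α₁ x : ℝ) : ℝ := sigmoid (α₁ * Real.tanh (α₀ * x))

noncomputable def heaviside (x : ℝ) : ℝ := if 0 ≤ x then 1 else 0

lemma tanh_eq_exp (y : ℝ) :
    Real.tanh y = (Real.exp (2*y) - 1) / (Real.exp (2*y) + 1) := by
  rw [Real.tanh_eq_sinh_div_cosh, Real.sinh_eq, Real.cosh_eq,
    show (2:ℝ)*y = y + y by ring, Real.exp_add, Real.exp_neg]
  have h := Real.exp_pos y
  have h2 : Real.exp y * Real.exp y + 1 > 0 := by positivity
  field_simp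

lemma tanh_ge {t y : ℝ} (ht0 : 0 < t) (ht1 : t < 1)
    (hy : Real.log ((1+t)/(1-t)) ≤ 2*y) : t ≤ Real.tanh y := by
  have h1t : 0 < 1 - t := by linarith
  have hpos : 0 < (1+t)/(1-t) := by positivity
  have h : (1+t)/(1-t) ≤ Real.exp (2*y) := by
    calc (1+t)/(1-t) = Real.exp (Real.log ((1+t)/(1-t))) := (Real.exp_log hpos).symm
    _ ≤ Real.exp (2*y) := Real.exp_le_exp.mpr hy
  rw [tanh_eq_exp]
  set e := Real.exp (2*y) with he
  have he0 : 0 < e := Real.exp_pos _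
  rw [le_div_iff₀ (by linarith)]
  rw [div_le_iff₀ h1t] at h
  nlinarith

lemma sigmoid_pos (x : ℝ) : 0 < sigmoid x := by
  unfold sigmoid; positivity

lemma sigmoid_lt_one (x : ℝ) : sigmoid x < 1 := by
  unfold sigmoid
  rw [div_lt_one (by positivity)]
  linarith [Real.exp_pos (-x)]

lemma sigmoid_mono {a b : ℝ} (h : a ≤ b) : sigmoid a ≤ sigmoid b := by
  unfold sigmoid
  apply one_div_le_one_div_of_le (by positivity)
  have := Real.exp_le_exp.mpr (neg_le_neg h)
  linarith

lemma sigmoid_neg (x : ℝ) : sigmoid (-x) = 1 - sigmoid x := by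
  unfold sigmoid
  rw [neg_neg, Real.exp_neg]
  have h := Real.exp_pos x
  have h1 : 1 + Real.exp x > 0 := by positivity
  have h2 : 1 + (Real.exp x)⁻¹ > 0 := by positivity
  field_simp
  ring

theorem stmt_12 (ε α₀ α₁ : ℝ) (h₀ : 0 < α₀) (h₁ : 0 < α₁)
    (hε : ε ∈ Set.Ioo (0:ℝ) (1/2))
    (hα₁ : α₁ > Real.log ((1 - ε) / ε))
    (hα₀ : α₀ ≥ (1 / (2 * ε)) *
      Real.log ((α₁ + Real.log ((1 - ε) / ε)) / (α₁ - Real.log ((1 - ε) / ε)))) :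
    (∀ x : ℝ, |x| ≥ ε → |heaviside x - HTAF α₀ α₁ x| ≤ ε) ∧
    (∀ x : ℝ, |heaviside x - HTAF α₀ α₁ x| ≤ 1) := by
  obtain ⟨hε0, hε2⟩ := hε
  set L := Real.log ((1 - ε) / ε) with hLdef
  have h1ε : 0 < 1 - ε := by linarith
  have hL0 : 0 < L := Real.log_pos (by rw [lt_div_iff₀ hε0]; linarith)
  have hLα : L < α₁ := hα₁
  have hαL : 0 < α₁ - L := by linarith
  have ht0 : 0 < L / α₁ := by positivity
  have ht1 : L / α₁ < 1 := by rw [div_lt_one h₁]; linarith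
  -- sigmoid L = 1 - ε
  have hsigL : sigmoid L = 1 - ε := by
    unfold sigmoid
    rw [hLdef, ← Real.log_inv, Real.exp_log (by positivity)]
    rw [inv_div]
    field_simp
    ring
  -- key inequality
  have key : ∀ x : ℝ, ε ≤ x → L ≤ α₁ * Real.tanh (α₀ * x) := by
    intro x hx
    have hfrac : (1 + L/α₁)/(1 - L/α₁) = (α₁ + L)/(α₁ - L) := by
      rw [div_eq_div_iff (by intro h; nlinarith : (1:ℝ) - L/α₁ ≠ 0) hαL.ne']
      field_simp
    have hlog : Real.log ((α₁ + L)/(α₁ - L)) ≤ 2 * (α₀ * x) := by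
      have hα₀' : Real.log ((α₁ + L)/(α₁ - L)) ≤ α₀ * (2*ε) := by
        rw [ge_iff_le, one_div_mul_eq_div] at hα₀
        exact (div_le_iff₀ (by linarith)).mp hα₀
      nlinarith [mul_le_mul_of_nonneg_left hx (le_of_lt h₀)]
    have ht : L/α₁ ≤ Real.tanh (α₀ * x) := by
      apply tanh_ge ht0 ht1
      rw [hfrac]; exact hlog
    calc L = α₁ * (L/α₁) := by field_simp
    _ ≤ α₁ * Real.tanh (α₀ * x) := by
        exact mul_le_mul_of_nonneg_left ht (le_of_lt h₁)
  have hHTAF_pos : ∀ x : ℝ, 0 < HTAF α₀ α₁ x := fun x => sigmoid_pos _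
  have hHTAF_lt : ∀ x : ℝ, HTAF α₀ α₁ x < 1 := fun x => sigmoid_lt_one _
  constructor
  · intro x hx
    rcases le_abs.mp hx with hxp | hxn
    · -- x ≥ ε
      have hhx : heaviside x = 1 := by
        unfold heaviside; rw [if_pos (by linarith)]
      have hge : 1 - ε ≤ HTAF α₀ α₁ x := by
        rw [← hsigL]; exact sigmoid_mono (key x hxp)
      rw [hhx]
      rw [abs_le]
      constructor <;> [linarith [hHTAF_lt x]; linarith]
    · -- -x ≥ ε, i.e. x ≤ -ε
      have hxneg : x ≤ -ε := by linarith
      have hhx : heaviside x = 0 := by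
        unfold heaviside; rw [if_neg (by linarith)]
      have hle : HTAF α₀ α₁ x ≤ ε := by
        have h1 : L ≤ α₁ * Real.tanh (α₀ * (-x)) := key (-x) hxn
        have h2 : α₁ * Real.tanh (α₀ * x) ≤ -L := by
          have : Real.tanh (α₀ * x) = -Real.tanh (α₀ * (-x)) := by
            rw [show α₀ * x = -(α₀ * (-x)) by ring, Real.tanh_neg]
          rw [this]; nlinarith
        calc HTAF α₀ α₁ x ≤ sigmoid (-L) := sigmoid_mono h2
        _ = 1 - sigmoid L := sigmoid_neg L
        _ = ε := by rw [hsigL]; ring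
      rw [hhx, abs_le]
      constructor <;> [linarith; linarith [hHTAF_pos x]]
  · intro x
    have h1 := hHTAF_pos x
    have h2 := hHTAF_lt x
    unfold heaviside
    split <;> rw [abs_le] <;> constructor <;> linarith
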